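/- Let A be a unital C*-algebra carrying a faithful tracial state τ, and let a, b ∈ A be hermitian elements (a* = a, b* = b) with ab ≠ ba. Then there exists a hermitian element H ∈ A such that the function f : ℝ → ℝ, f(t) := Re τ(a · exp(itH) · b · exp(−itH)), has derivative f′(0) > 0. -/

import Mathlib

open scoped ComplexOrder

/-- Dykema–Paulsen–Prakash: let A be a unital C*-algebra with a faithful
tracial state τ and let a, b be hermitian elements with ab ≠ ba. Then there is a hermitian
H ∈ A such that f(t) := Re τ(a · exp(itH) · b · exp(−itH)) has derivative f′(0) > 0. -/
theorem stmt13 {A : Type*} [NormedRing A] [StarRing A] [CStarRing A]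
    [NormedAlgebra ℂ A] [CompleteSpace A] [StarModule ℂ A]
    (τ : A →ₗ[ℂ] ℂ)
    (hunit : τ 1 = 1)
    (hpos : ∀ x : A, 0 ≤ τ (star x * x))
    (htracial : ∀ x y : A, τ (x * y) = τ (y * x))
    (hfaithful : ∀ x : A, τ (star x * x) = 0 → x = 0)
    (a b : A) (ha : star a = a) (hb : star b = b) (hab : a * b ≠ b * a) :
    ∃ H : A, star H = H ∧ ∃ d : ℝ, 0 < d ∧
      HasDerivAt (fun t : ℝ =>
        (τ (a * NormedSpace.exp ((Complex.I * (t : ℂ)) • H) * b *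
            NormedSpace.exp ((-(Complex.I * (t : ℂ))) • H))).re) d 0 := by
  letI : CStarAlgebra A := { }
  letI : PartialOrder A := CStarAlgebra.spectralOrder A
  haveI : StarOrderedRing A := CStarAlgebra.spectralOrderedRing A
  -- τ is nonnegative on nonneg elements
  have hnonneg : ∀ z : A, 0 ≤ z → 0 ≤ τ z := by
    intro z hz
    rw [StarOrderedRing.nonneg_iff] at hz
    induction hz using AddSubmonoid.closure_induction with
    | mem x hx => obtain ⟨s, rfl⟩ := hx; exact hpos s
    | zero => simp
    | add x y _ _ hx hy => rw [map_add]; exact add_nonneg hx hy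
  -- values on selfadjoint elements are real and bounded by the norm
  have hsa : ∀ s : A, star s = s → τ s = ((τ s).re : ℂ) ∧ |(τ s).re| ≤ ‖s‖ := by
    intro s hs
    have hsa' : IsSelfAdjoint s := hs
    have halg : ∀ r : ℝ, τ (algebraMap ℝ A r) = (r : ℂ) := by
      intro r
      rw [IsScalarTower.algebraMap_apply ℝ ℂ A, Algebra.algebraMap_eq_smul_one, map_smul,
        hunit, smul_eq_mul, mul_one, Complex.coe_algebraMap]
    have h1 : 0 ≤ τ (algebraMap ℝ A ‖s‖ - s) :=
      hnonneg _ (sub_nonneg.mpr hsa'.le_algebraMap_norm_self)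
    have h2 : 0 ≤ τ (s - -algebraMap ℝ A ‖s‖) :=
      hnonneg _ (sub_nonneg.mpr hsa'.neg_algebraMap_norm_le_self)
    rw [map_sub, halg, Complex.le_def] at h1
    rw [map_sub, map_neg, halg, Complex.le_def] at h2
    simp only [Complex.zero_re, Complex.zero_im, Complex.sub_re, Complex.sub_im,
      Complex.ofReal_re, Complex.ofReal_im, Complex.neg_re, Complex.neg_im] at h1 h2
    constructor
    · exact Complex.ext rfl (by simpa using h1.2.symm)
    · rw [abs_le]; constructor <;> linarith [h1.1, h2.1]
  -- τ is bounded
  have hbound : ∀ x : A, ‖τ x‖ ≤ 2 * ‖x‖ := by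
    intro x
    obtain ⟨hre, hre2⟩ := hsa (realPart x) (realPart x).2
    obtain ⟨him, him2⟩ := hsa (imaginaryPart x) (imaginaryPart x).2
    have hdecomp : τ x = τ (realPart x) + Complex.I * τ (imaginaryPart x) := by
      conv_lhs => rw [← realPart_add_I_smul_imaginaryPart x]
      rw [map_add, map_smul, smul_eq_mul]
    have hnre : ‖(realPart x : A)‖ ≤ ‖x‖ := by
      rw [realPart_apply_coe]
      calc ‖(2:ℝ)⁻¹ • (x + star x)‖ ≤ (2:ℝ)⁻¹ * (‖x‖ + ‖star x‖) := by
            rw [norm_smul]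
            gcongr
            · simp
            · exact norm_add_le _ _
        _ = ‖x‖ := by rw [norm_star]; ring
    have hnim : ‖(imaginaryPart x : A)‖ ≤ ‖x‖ := by
      rw [imaginaryPart_apply_coe, norm_smul, norm_smul, norm_neg, Complex.norm_I, one_mul,
        Real.norm_eq_abs, abs_inv, abs_two]
      calc (2:ℝ)⁻¹ * ‖x - star x‖ ≤ (2:ℝ)⁻¹ * (‖x‖ + ‖star x‖) := by
            gcongr; exact norm_sub_le _ _
        _ = ‖x‖ := by rw [norm_star]; ring
    calc ‖τ x‖ ≤ ‖τ (realPart x : A)‖ + ‖Complex.I * τ (imaginaryPart x : A)‖ := by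
          rw [hdecomp]; exact norm_add_le _ _
      _ = |(τ (realPart x : A)).re| + |(τ (imaginaryPart x : A)).re| := by
          rw [norm_mul, Complex.norm_I, one_mul, hre, him]
          simp [Complex.norm_real, Real.norm_eq_abs]
      _ ≤ ‖x‖ + ‖x‖ := add_le_add (hre2.trans hnre) (him2.trans hnim)
      _ = 2 * ‖x‖ := by ring
  set c : A := a * b - b * a with hc
  have hc0 : c ≠ 0 := sub_ne_zero.mpr hab
  have hstarc : star c = -c := by
    rw [hc, star_sub, star_mul, star_mul, ha, hb, neg_sub]
  set H : A := (-Complex.I) • c with hH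
  have hHsa : star H = H := by
    rw [hH, star_smul, hstarc, star_neg, Complex.star_def, Complex.conj_I, neg_neg,
      smul_neg, neg_smul]
  have key : ∀ t : ℝ, (Complex.I * (t : ℂ)) • H = t • c := by
    intro t
    rw [hH, smul_smul]
    have h1 : Complex.I * (t : ℂ) * -Complex.I = (t : ℂ) := by
      have := Complex.I_mul_I
      ring_nf
      rw [Complex.I_sq]
      ring
    rw [h1]
    exact algebraMap_smul ℂ t c
  have keyneg : ∀ t : ℝ, (-(Complex.I * (t : ℂ))) • H = t • (-c) := by
    intro t
    rw [neg_smul, key t, smul_neg]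
  -- derivatives of the exponentials
  have hu : HasDerivAt (fun t : ℝ => NormedSpace.exp ((Complex.I * (t : ℂ)) • H)) c 0 := by
    have hfn : (fun t : ℝ => NormedSpace.exp ((Complex.I * (t : ℂ)) • H))
        = fun t : ℝ => NormedSpace.exp (t • c) := by
      funext t
      rw [key t]
    rw [hfn]
    simpa using hasDerivAt_exp_smul_const (𝕂 := ℝ) c (0 : ℝ)
  have hv : HasDerivAt (fun t : ℝ => NormedSpace.exp ((-(Complex.I * (t : ℂ))) • H)) (-c) 0 := by
    have hfn : (fun t : ℝ => NormedSpace.exp ((-(Complex.I * (t : ℂ))) • H))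
        = fun t : ℝ => NormedSpace.exp (t • (-c)) := by
      funext t
      rw [keyneg t]
    rw [hfn]
    simpa using hasDerivAt_exp_smul_const (𝕂 := ℝ) (-c) (0 : ℝ)
  -- derivative of the product
  have hg : HasDerivAt (fun t : ℝ => a * NormedSpace.exp ((Complex.I * (t : ℂ)) • H) * b *
      NormedSpace.exp ((-(Complex.I * (t : ℂ))) • H)) (a * c * b - a * b * c) 0 := by
    have h1 := ((hu.const_mul a).mul_const b).mul hv
    simp only [Complex.ofReal_zero, mul_zero, zero_smul, neg_zero, NormedSpace.exp_zero,
      mul_one, mul_neg] at h1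
    rw [sub_eq_add_neg]
    exact h1
  -- the value of the derivative under τ
  have hval : τ (a * c * b - a * b * c) = τ (star c * c) := by
    have h1 : τ (a * c * b) = τ (b * a * c) := by
      rw [htracial (a * c) b, mul_assoc]
    rw [map_sub, h1, ← map_sub, hstarc]
    congr 1
    rw [hc]
    noncomm_ring
  -- positivity
  have hp : 0 ≤ τ (star c * c) := hpos c
  have hne : τ (star c * c) ≠ 0 := fun h => hc0 (hfaithful c h)
  rw [Complex.le_def] at hp
  simp only [Complex.zero_re, Complex.zero_im] at hp
  have hd : 0 < (τ (star c * c)).re := by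
    rcases lt_or_eq_of_le hp.1 with h | h
    · exact h
    · exact absurd (Complex.ext h.symm hp.2.symm) hne
  -- assemble
  refine ⟨H, hHsa, (τ (star c * c)).re, hd, ?_⟩
  let τ' : A →L[ℂ] ℂ := LinearMap.mkContinuous τ 2 hbound
  let L : A →L[ℝ] ℝ := Complex.reCLM.comp (τ'.restrictScalars ℝ)
  have hfinal := L.hasFDerivAt.comp_hasDerivAt 0 hg
  have hLD : L (a * c * b - a * b * c) = (τ (star c * c)).re := by
    show (τ (a * c * b - a * b * c)).re = _
    rw [hval]
  rw [hLD] at hfinal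
  exact hfinal
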